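/- For finitely supported nonnegative functions φ₁,…,φ_k : G^l → ℝ on an abelian group G, where each φ_j = (φ_j^{(1)},…,φ_j^{(l)}) is a tuple of l functions G → ℝ≥0, the following holds: |Σ_{x∈G^{l−1}} C_l(φ₁)(x)⋯C_l(φ_k)(x)| ≤ ∏_{j=1}^k ∏_{i=1}^l ‖φ_j^{(i)}‖_{E_{k,l}}, where ‖f‖_{E_{k,l}}^{kl} := Σ_{x₁,…,x_{k−1}} (C_k(f)(x₁,…,x_{k−1}))^l. -/

import Mathlib

open Finset Function Pointwise

def ext {G : Type*} [AddCommGroup G] (l : ℕ) (x : Fin (l - 1) → G) : Fin l → G :=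
  fun i => if h : i.1 = 0 then 0 else x ⟨i.1 - 1, by omega⟩

/-- `C_l(f₁,…,f_l)(x₁,…,x_{l-1}) = Σ_z ∏ᵢ fᵢ(z + xᵢ)` (with `x₀ = 0`). -/
noncomputable def CconvT {G : Type*} [AddCommGroup G] (l : ℕ) (f : Fin l → G → ℝ)
    (x : Fin (l - 1) → G) : ℝ :=
  ∑ᶠ z : G, ∏ i : Fin l, f i (z + ext l x i)

section Aux
variable {G : Type*} [AddCommGroup G] [DecidableEq G]

lemma ext_zero (l : ℕ) (h : 0 < l) (x : Fin (l - 1) → G) : ext l x ⟨0, h⟩ = 0 := by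
  simp [_root_.ext]

lemma ext_succ (l : ℕ) (h : 0 < l) (x : Fin (l - 1) → G) (i : Fin (l - 1)) :
    ext l x ⟨i.1 + 1, by have := i.2; omega⟩ = x i := by
  simp only [_root_.ext, Nat.add_sub_cancel, dif_neg (Nat.succ_ne_zero i.1)]

lemma cconv_eq_sum (l : ℕ) (hl : 0 < l) (f : Fin l → G → ℝ) (s : Finset G)
    (hs : ∀ i, support (f i) ⊆ s) (x : Fin (l - 1) → G) :
    CconvT l f x = ∑ z ∈ s, ∏ i : Fin l, f i (z + ext l x i) := by
  apply finsum_eq_sum_of_support_subset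
  intro z hz
  have h0 := (Finset.prod_ne_zero_iff.1 hz) ⟨0, hl⟩ (Finset.mem_univ _)
  rw [ext_zero l hl x, add_zero] at h0
  exact hs _ h0

lemma support_cconv (l : ℕ) (hl : 0 < l) (f : Fin l → G → ℝ) (s : Finset G)
    (hs : ∀ i, support (f i) ⊆ s) :
    support (fun x => CconvT l f x) ⊆
      ↑(Fintype.piFinset fun _ : Fin (l - 1) => s - s) := by
  intro x hx
  have hx' : CconvT l f x ≠ 0 := hx
  rw [cconv_eq_sum l hl f s hs x] at hx'
  obtain ⟨z, _, hz⟩ := Finset.exists_ne_zero_of_sum_ne_zero hx'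
  have hall : ∀ i : Fin l, z + ext l x i ∈ s := fun i =>
    hs i ((Finset.prod_ne_zero_iff.1 hz) i (Finset.mem_univ _))
  have hz0 : z ∈ s := by have := hall ⟨0, hl⟩; rwa [ext_zero l hl x, add_zero] at this
  simp only [Finset.coe_sort_coe, Finset.mem_coe, Fintype.mem_piFinset]
  intro i
  have := hall ⟨i.1 + 1, by have := i.2; omega⟩
  rw [ext_succ l hl x i] at this
  have : (z + x i) - z ∈ s - s := Finset.sub_mem_sub this hz0
  simpa using this

lemma cconv_nonneg (l : ℕ) (f : Fin l → G → ℝ) (hf : ∀ i t, 0 ≤ f i t)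
    (x : Fin (l - 1) → G) : 0 ≤ CconvT l f x :=
  finsum_nonneg fun z => Finset.prod_nonneg fun i _ => hf i _

end Aux

section Swap
variable {G : Type*} [AddCommGroup G] [DecidableEq G]

lemma ext_add (k : ℕ) (hk : 0 < k) (z : Fin k → G) (j : Fin k) :
    z ⟨0, hk⟩ + ext k (fun j' : Fin (k - 1) =>
      z ⟨j'.1 + 1, by have := j'.2; omega⟩ - z ⟨0, hk⟩) j = z j := by
  by_cases h : j.1 = 0
  · simp only [_root_.ext, dif_pos h, add_zero]
    exact congrArg z (Fin.ext (show (0 : ℕ) = j.1 from h.symm))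
  · simp only [_root_.ext, dif_neg h]
    have hj : z ⟨j.1 - 1 + 1, by have := j.2; omega⟩ = z j :=
      congrArg z (Fin.ext (show j.1 - 1 + 1 = j.1 by omega))
    rw [hj]
    abel

lemma side (k l : ℕ) (hk : 0 < k) (hl : 0 < l) (ψ : Fin k → Fin l → G → ℝ)
    (s : Finset G) (hs : ∀ j i, support (ψ j i) ⊆ s) :
    ∑ᶠ x : Fin (l - 1) → G, ∏ j : Fin k, CconvT l (ψ j) x
      = ∑ᶠ p : (Fin (l - 1) → G) × (Fin k → G),
          ∏ j : Fin k, ∏ i : Fin l, ψ j i (p.2 j + ext l p.1 i) := by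
  set X := Fintype.piFinset fun _ : Fin (l - 1) => s - s with hX
  set Z := Fintype.piFinset fun _ : Fin k => s with hZ
  have h1 : ∑ᶠ x : Fin (l - 1) → G, ∏ j : Fin k, CconvT l (ψ j) x
      = ∑ x ∈ X, ∏ j : Fin k, CconvT l (ψ j) x := by
    apply finsum_eq_sum_of_support_subset
    intro x hx
    have hx' : ∏ j : Fin k, CconvT l (ψ j) x ≠ 0 := hx
    have : CconvT l (ψ ⟨0, hk⟩) x ≠ 0 :=
      (Finset.prod_ne_zero_iff.1 hx') ⟨0, hk⟩ (Finset.mem_univ _)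
    exact support_cconv l hl (ψ ⟨0, hk⟩) s (hs _) this
  have h2 : ∀ x : Fin (l - 1) → G, ∏ j : Fin k, CconvT l (ψ j) x
      = ∑ z ∈ Z, ∏ j : Fin k, ∏ i : Fin l, ψ j i (z j + ext l x i) := by
    intro x
    rw [Finset.prod_congr rfl fun j _ => cconv_eq_sum l hl (ψ j) s (hs j) x]
    exact Finset.prod_univ_sum _ _
  rw [h1, Finset.sum_congr rfl fun x _ => h2 x, ← Finset.sum_product']
  symm
  apply finsum_eq_sum_of_support_subset
  intro p hp
  have hp' : ∏ j : Fin k, ∏ i : Fin l, ψ j i (p.2 j + ext l p.1 i) ≠ 0 := hp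
  have hall : ∀ (j : Fin k) (i : Fin l), ψ j i (p.2 j + ext l p.1 i) ≠ 0 := by
    intro j i
    exact (Finset.prod_ne_zero_iff.1
      ((Finset.prod_ne_zero_iff.1 hp') j (Finset.mem_univ _))) i (Finset.mem_univ _)
  have hz : ∀ j : Fin k, p.2 j ∈ s := by
    intro j
    have := hs j ⟨0, hl⟩ (hall j ⟨0, hl⟩)
    rwa [ext_zero l hl p.1, add_zero] at this
  have hxm : ∀ i : Fin (l - 1), p.1 i ∈ s - s := by
    intro i
    have h1' := hs ⟨0, hk⟩ ⟨i.1 + 1, by have := i.2; omega⟩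
      (hall ⟨0, hk⟩ ⟨i.1 + 1, by have := i.2; omega⟩)
    rw [ext_succ l hl p.1 i] at h1'
    have := Finset.sub_mem_sub h1' (hz ⟨0, hk⟩)
    simpa using this
  rw [Finset.mem_coe, Finset.mem_product]
  exact ⟨by rw [hX]; exact Fintype.mem_piFinset.2 hxm, by rw [hZ]; exact Fintype.mem_piFinset.2 hz⟩

lemma swap_sum (k l : ℕ) (hk : 0 < k) (hl : 0 < l) (ψ : Fin k → Fin l → G → ℝ)
    (hsupp : ∀ j i, (support (ψ j i)).Finite) :
    ∑ᶠ x : Fin (l - 1) → G, ∏ j : Fin k, CconvT l (ψ j) x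
      = ∑ᶠ u : Fin (k - 1) → G, ∏ i : Fin l, CconvT k (fun j => ψ j i) u := by
  set s : Finset G := Finset.univ.biUnion
    (fun ji : Fin k × Fin l => (hsupp ji.1 ji.2).toFinset) with hsdef
  have hs : ∀ j i, support (ψ j i) ⊆ s := by
    intro j i t ht
    rw [hsdef]
    exact Finset.mem_coe.2 (Finset.mem_biUnion.2 ⟨(j, i), Finset.mem_univ _,
      (hsupp j i).mem_toFinset.2 ht⟩)
  rw [side k l hk hl ψ s hs, side l k hl hk (fun i j => ψ j i) s (fun i j => hs j i)]
  set e : (Fin (l - 1) → G) × (Fin k → G) → (Fin (k - 1) → G) × (Fin l → G) :=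
    fun p => (fun j => p.2 ⟨j.1 + 1, by have := j.2; omega⟩ - p.2 ⟨0, hk⟩,
      fun i => p.2 ⟨0, hk⟩ + ext l p.1 i) with he
  set e' : (Fin (k - 1) → G) × (Fin l → G) → (Fin (l - 1) → G) × (Fin k → G) :=
    fun q => (fun i => q.2 ⟨i.1 + 1, by have := i.2; omega⟩ - q.2 ⟨0, hl⟩,
      fun j => q.2 ⟨0, hl⟩ + ext k q.1 j) with he'
  have hbij : Function.Bijective e := by
    apply Function.bijective_iff_has_inverse.2
    refine ⟨e', fun p => ?_, fun q => ?_⟩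
    · ext1 <;> funext t
      · show (e p).2 ⟨t.1 + 1, _⟩ - (e p).2 ⟨0, hl⟩ = p.1 t
        rw [he]
        simp only
        rw [ext_succ l hl p.1 t, ext_zero l hl p.1, add_zero]
        abel
      · show (e p).2 ⟨0, hl⟩ + ext k (e p).1 t = p.2 t
        rw [he]
        simp only
        rw [ext_zero l hl p.1, add_zero]
        exact ext_add k hk p.2 t
    · ext1 <;> funext t
      · show (e' q).2 ⟨t.1 + 1, _⟩ - (e' q).2 ⟨0, hk⟩ = q.1 t
        rw [he']
        simp only
        rw [ext_succ k hk q.1 t, ext_zero k hk q.1, add_zero]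
        abel
      · show (e' q).2 ⟨0, hk⟩ + ext l (e' q).1 t = q.2 t
        rw [he']
        simp only
        rw [ext_zero k hk q.1, add_zero]
        exact ext_add l hl q.2 t
  apply finsum_eq_of_bijective e hbij
  intro p
  rw [Finset.prod_comm]
  refine Finset.prod_congr rfl fun i _ => Finset.prod_congr rfl fun j _ => ?_
  congr 1
  show p.2 j + ext l p.1 i = (e p).2 i + ext k (e p).1 j
  rw [he]
  simp only
  rw [add_right_comm]
  congr 1
  exact (ext_add k hk p.2 j).symm
end Swap

lemma rpow_inv_pow {x : ℝ} (hx : 0 ≤ x) {n : ℕ} (hn : n ≠ 0) :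
    (x ^ ((1 : ℝ) / n)) ^ n = x := by
  rw [← Real.rpow_natCast (x ^ ((1:ℝ)/n)) n, ← Real.rpow_mul hx, one_div,
    inv_mul_cancel₀ (by exact_mod_cast hn), Real.rpow_one]

lemma holder {α : Type*} (n : ℕ) (hn : 0 < n) (A : Finset α) (g : Fin n → α → ℝ)
    (hg : ∀ j a, 0 ≤ g j a) :
    ∑ a ∈ A, ∏ j : Fin n, g j a ≤ ∏ j : Fin n, (∑ a ∈ A, g j a ^ n) ^ ((1 : ℝ) / n) := by
  have hnR : ((n:ℝ)) ≠ 0 := by exact_mod_cast hn.ne'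
  set S : Fin n → ℝ := fun j => ∑ a ∈ A, g j a ^ n with hS
  have hS0 : ∀ j, 0 ≤ S j := fun j => Finset.sum_nonneg fun a _ => pow_nonneg (hg j a) n
  by_cases hz : ∃ j, S j = 0
  · obtain ⟨j0, hj0⟩ := hz
    have hg0 : ∀ a ∈ A, g j0 a = 0 := by
      intro a ha
      have := (Finset.sum_eq_zero_iff_of_nonneg (fun a _ => pow_nonneg (hg j0 a) n)).1 hj0 a ha
      exact pow_eq_zero_iff hn.ne'|>.1 this
    have hL : ∑ a ∈ A, ∏ j : Fin n, g j a = 0 :=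
      Finset.sum_eq_zero fun a ha => Finset.prod_eq_zero (Finset.mem_univ j0) (hg0 a ha)
    have hR : (0:ℝ) ≤ ∏ j : Fin n, (S j) ^ ((1:ℝ)/n) :=
      Finset.prod_nonneg fun j _ => Real.rpow_nonneg (hS0 j) _
    rw [hL]; exact hR
  · push_neg at hz
    have hSpos : ∀ j, 0 < S j := fun j => lt_of_le_of_ne (hS0 j) (Ne.symm (hz j))
    have hcpos : ∀ j, 0 < (S j) ^ ((1:ℝ)/n) := fun j => Real.rpow_pos_of_pos (hSpos j) _
    have hcn : ∀ j, ((S j) ^ ((1:ℝ)/n)) ^ n = S j := fun j => rpow_inv_pow (hS0 j) hn.ne'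
    have hw1 : ∑ _j : Fin n, (1:ℝ)/n = 1 := by
      rw [Finset.sum_const, Finset.card_univ, Fintype.card_fin, nsmul_eq_mul, mul_one_div,
        div_self hnR]
    have key : ∑ a ∈ A, ∏ j : Fin n, (g j a / (S j) ^ ((1:ℝ)/n)) ≤ 1 := by
      have ptw : ∀ a, ∏ j : Fin n, (g j a / (S j) ^ ((1:ℝ)/n))
          ≤ ∑ j : Fin n, (1/(n:ℝ)) * (g j a / (S j) ^ ((1:ℝ)/n)) ^ n := by
        intro a
        have h1 := Real.geom_mean_le_arith_mean_weighted Finset.univ (fun _ => (1:ℝ)/n)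
          (fun j => (g j a / (S j) ^ ((1:ℝ)/n)) ^ n)
          (fun _ _ => one_div_nonneg.2 (Nat.cast_nonneg n)) hw1
          (fun j _ => pow_nonneg (div_nonneg (hg j a) (hcpos j).le) n)
        refine le_trans (le_of_eq ?_) h1
        refine Finset.prod_congr rfl fun j _ => ?_
        show g j a / (S j) ^ ((1:ℝ)/n) = ((g j a / (S j) ^ ((1:ℝ)/n)) ^ n) ^ ((1:ℝ)/(n:ℝ))
        have h2 : (0:ℝ) ≤ g j a / (S j) ^ ((1:ℝ)/n) := div_nonneg (hg j a) (hcpos j).le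
        rw [← Real.rpow_natCast (g j a / (S j) ^ ((1:ℝ)/n)) n, ← Real.rpow_mul h2,
          mul_one_div, div_self hnR, Real.rpow_one]
      calc ∑ a ∈ A, ∏ j : Fin n, (g j a / (S j) ^ ((1:ℝ)/n))
          ≤ ∑ a ∈ A, ∑ j : Fin n, (1/(n:ℝ)) * (g j a / (S j) ^ ((1:ℝ)/n)) ^ n :=
            Finset.sum_le_sum fun a _ => ptw a
        _ = ∑ j : Fin n, (1/(n:ℝ)) * (S j / S j) := by
            rw [Finset.sum_comm]
            refine Finset.sum_congr rfl fun j _ => ?_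
            rw [← Finset.mul_sum]
            congr 1
            have : ∀ a, (g j a / (S j) ^ ((1:ℝ)/n)) ^ n = g j a ^ n / S j := fun a => by
              rw [div_pow, hcn j]
            rw [Finset.sum_congr rfl fun a _ => this a, ← Finset.sum_div]
        _ = 1 := by
            rw [Finset.sum_congr rfl fun j _ => by rw [div_self (hz j), mul_one]]
            exact hw1
    have hP : 0 < ∏ j : Fin n, (S j) ^ ((1:ℝ)/n) := Finset.prod_pos fun j _ => hcpos j
    rw [← div_le_one hP, Finset.sum_div]
    calc ∑ a ∈ A, (∏ j : Fin n, g j a) / (∏ j : Fin n, (S j) ^ ((1:ℝ)/n))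
        = ∑ a ∈ A, ∏ j : Fin n, (g j a / (S j) ^ ((1:ℝ)/n)) :=
          Finset.sum_congr rfl fun a _ => (Finset.prod_div_distrib _ _).symm
      _ ≤ 1 := key


/-- The `E_{k,l}` norm: `‖f‖_{E_{k,l}} = (Σ_{x ∈ G^{k-1}} C_k(f)(x)^l)^{1/(kl)}`. -/
noncomputable def normEkl {G : Type*} [AddCommGroup G] (k l : ℕ) (f : G → ℝ) : ℝ :=
  (∑ᶠ x : Fin (k - 1) → G, (CconvT k (fun _ => f) x) ^ l) ^ ((1 : ℝ) / (k * l))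

theorem stmt_18 {G : Type*} [AddCommGroup G] (k l : ℕ) (hk : 2 ≤ k) (hl : 2 ≤ l)
    (φ : Fin k → Fin l → G → ℝ) (hpos : ∀ j i t, 0 ≤ φ j i t)
    (hsupp : ∀ j i, (Function.support (φ j i)).Finite) :
    |∑ᶠ x : Fin (l - 1) → G, ∏ j : Fin k, CconvT l (φ j) x|
      ≤ ∏ j : Fin k, ∏ i : Fin l, normEkl k l (φ j i) := by
  haveI := Classical.decEq G
  have hk0 : 0 < k := by omega
  have hl0 : 0 < l := by omega
  have hkR : ((k:ℝ)) ≠ 0 := by positivity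
  have hlR : ((l:ℝ)) ≠ 0 := by positivity
  set s : Finset G := Finset.univ.biUnion
    (fun ji : Fin k × Fin l => (hsupp ji.1 ji.2).toFinset) with hsdef
  have hs : ∀ j i, support (φ j i) ⊆ s := by
    intro j i t ht
    exact Finset.mem_coe.2 (Finset.mem_biUnion.2 ⟨(j, i), Finset.mem_univ _,
      (hsupp j i).mem_toFinset.2 ht⟩)
  set X := Fintype.piFinset fun _ : Fin (l - 1) => s - s with hXdef
  set U := Fintype.piFinset fun _ : Fin (k - 1) => s - s with hUdef
  have hC0 : ∀ (j : Fin k) x, 0 ≤ CconvT l (φ j) x :=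
    fun j x => cconv_nonneg l (φ j) (fun i t => hpos j i t) x
  have hCk0 : ∀ (j : Fin k) (i : Fin l) u, 0 ≤ CconvT k (fun _ => φ j i) u :=
    fun j i u => cconv_nonneg k _ (fun _ t => hpos j i t) u
  have hN0 : ∀ (j : Fin k) (i : Fin l), 0 ≤ normEkl k l (φ j i) := by
    intro j i
    exact Real.rpow_nonneg (finsum_nonneg fun u => pow_nonneg (hCk0 j i u) l) _
  rw [abs_of_nonneg (finsum_nonneg fun x => Finset.prod_nonneg fun j _ => hC0 j x)]
  have hsub : support (fun x => ∏ j : Fin k, CconvT l (φ j) x) ⊆ ↑X := by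
    intro x hx
    have hx' : ∏ j : Fin k, CconvT l (φ j) x ≠ 0 := hx
    exact support_cconv l hl0 (φ ⟨0, hk0⟩) s (hs _)
      ((Finset.prod_ne_zero_iff.1 hx') ⟨0, hk0⟩ (Finset.mem_univ _))
  rw [finsum_eq_sum_of_support_subset _ hsub]
  -- per-row bound
  have row : ∀ j : Fin k,
      (∑ x ∈ X, CconvT l (φ j) x ^ k) ≤ (∏ i : Fin l, normEkl k l (φ j i)) ^ k := by
    intro j
    have hsubj : support (fun x => CconvT l (φ j) x ^ k) ⊆ ↑X := by
      intro x hx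
      have hx' : CconvT l (φ j) x ≠ 0 := fun h => hx (by simp [h, zero_pow hk0.ne'])
      exact support_cconv l hl0 (φ j) s (hs j) hx'
    have e1 : ∑ x ∈ X, CconvT l (φ j) x ^ k = ∑ᶠ x, CconvT l (φ j) x ^ k :=
      (finsum_eq_sum_of_support_subset _ hsubj).symm
    have e2 : ∑ᶠ x : Fin (l - 1) → G, CconvT l (φ j) x ^ k
        = ∑ᶠ x : Fin (l - 1) → G, ∏ _m : Fin k, CconvT l (φ j) x := by
      refine finsum_congr fun x => ?_
      rw [Finset.prod_const, Finset.card_univ, Fintype.card_fin]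
    have e3 := swap_sum k l hk0 hl0 (fun _m : Fin k => φ j) (fun _m i => hsupp j i)
    have hsubU : support (fun u => ∏ i : Fin l, CconvT k (fun _m : Fin k => φ j i) u) ⊆ ↑U := by
      intro u hu
      have hu' : ∏ i : Fin l, CconvT k (fun _m : Fin k => φ j i) u ≠ 0 := hu
      exact support_cconv k hk0 (fun _ => φ j ⟨0, hl0⟩) s (fun _ => hs j ⟨0, hl0⟩)
        ((Finset.prod_ne_zero_iff.1 hu') ⟨0, hl0⟩ (Finset.mem_univ _))
    have e4 : ∑ᶠ u : Fin (k - 1) → G, ∏ i : Fin l, CconvT k (fun _m : Fin k => φ j i) u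
        = ∑ u ∈ U, ∏ i : Fin l, CconvT k (fun _m : Fin k => φ j i) u :=
      finsum_eq_sum_of_support_subset _ hsubU
    have h5 := holder l hl0 U (fun i u => CconvT k (fun _m : Fin k => φ j i) u)
      (fun i u => hCk0 j i u)
    have h6 : ∀ i : Fin l,
        (∑ u ∈ U, CconvT k (fun _m : Fin k => φ j i) u ^ l) ^ ((1:ℝ)/l)
          = normEkl k l (φ j i) ^ k := by
      intro i
      have hsubUi : support (fun u => CconvT k (fun _ : Fin k => φ j i) u ^ l) ⊆ ↑U := by
        intro u hu
        have hu' : CconvT k (fun _ : Fin k => φ j i) u ≠ 0 :=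
          fun h => hu (by simp [h, zero_pow hl0.ne'])
        exact support_cconv k hk0 (fun _ => φ j i) s (fun _ => hs j i) hu'
      have hU : ∑ u ∈ U, CconvT k (fun _m : Fin k => φ j i) u ^ l
          = ∑ᶠ u : Fin (k - 1) → G, CconvT k (fun _ : Fin k => φ j i) u ^ l :=
        (finsum_eq_sum_of_support_subset _ hsubUi).symm
      set S : ℝ := ∑ᶠ u : Fin (k - 1) → G, CconvT k (fun _ : Fin k => φ j i) u ^ l with hSdef
      have hS0 : 0 ≤ S := finsum_nonneg fun u => pow_nonneg (hCk0 j i u) l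
      rw [hU]
      show S ^ ((1:ℝ)/l) = normEkl k l (φ j i) ^ k
      unfold normEkl
      rw [← hSdef, ← Real.rpow_natCast (S ^ ((1:ℝ)/((k:ℝ)*(l:ℝ)))) k, ← Real.rpow_mul hS0]
      congr 1
      field_simp
    calc ∑ x ∈ X, CconvT l (φ j) x ^ k
        = ∑ u ∈ U, ∏ i : Fin l, CconvT k (fun _m : Fin k => φ j i) u := by
          rw [e1, e2, e3, e4]
      _ ≤ ∏ i : Fin l, (∑ u ∈ U, CconvT k (fun _m : Fin k => φ j i) u ^ l) ^ ((1:ℝ)/l) := h5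
      _ = ∏ i : Fin l, normEkl k l (φ j i) ^ k := Finset.prod_congr rfl fun i _ => h6 i
      _ = (∏ i : Fin l, normEkl k l (φ j i)) ^ k := Finset.prod_pow _ _ _
  have H := holder k hk0 X (fun j x => CconvT l (φ j) x) (fun j x => hC0 j x)
  refine H.trans (Finset.prod_le_prod (fun j _ => Real.rpow_nonneg
    (Finset.sum_nonneg fun x _ => pow_nonneg (hC0 j x) k) _) (fun j _ => ?_))
  have hsum0 : 0 ≤ ∑ x ∈ X, CconvT l (φ j) x ^ k :=
    Finset.sum_nonneg fun x _ => pow_nonneg (hC0 j x) k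
  have hP0 : 0 ≤ ∏ i : Fin l, normEkl k l (φ j i) :=
    Finset.prod_nonneg fun i _ => hN0 j i
  calc (∑ x ∈ X, CconvT l (φ j) x ^ k) ^ ((1:ℝ)/k)
      ≤ ((∏ i : Fin l, normEkl k l (φ j i)) ^ k) ^ ((1:ℝ)/k) :=
        Real.rpow_le_rpow hsum0 (row j) (by positivity)
    _ = ∏ i : Fin l, normEkl k l (φ j i) := by
        rw [← Real.rpow_natCast (∏ i : Fin l, normEkl k l (φ j i)) k, ← Real.rpow_mul hP0,
          mul_one_div, div_self hkR, Real.rpow_one]
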